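/- Let {ε_t} be an i.i.d. sequence with sup_t ‖ε_t‖_{L^r} < ∞ for some r ≥ 2, and let Z_t = G(Z_{t−1}, ε_t) with G contractive with constants 0 ≤ C_Z < 1 and 0 ≤ C_ε < ∞. If Z'_t is an independent copy of Z_t and Z_{t+h} shares the innovations ε_{t+1:t+h} with G^{(h)}(Z'_t, ε_{t+1:t+h}), then ‖Z_{t+h} − G^{(h)}(Z'_t, ε_{t+1:t+h})‖_{L^r} ≤ 2 ‖Z_t‖_{L^r} exp(−γ h) with γ = −log(C_Z). In particular the process is geometric moment contracting. -/

import Mathlib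

open MeasureTheory ProbabilityTheory

variable {dZ : ℕ}

/-- The `h`-fold iterate of a system map `G`. -/
def sysIter (G : EuclideanSpace ℝ (Fin dZ) → EuclideanSpace ℝ (Fin dZ) → EuclideanSpace ℝ (Fin dZ))
    (z : EuclideanSpace ℝ (Fin dZ)) :
    (h : ℕ) → (Fin h → EuclideanSpace ℝ (Fin dZ)) → EuclideanSpace ℝ (Fin dZ)
  | 0, _ => z
  | h + 1, e => G (sysIter G z h (fun i => e i.castSucc)) (e (Fin.last h))

lemma sysIter_mem
    {Z E : Set (EuclideanSpace ℝ (Fin dZ))}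
    {G : EuclideanSpace ℝ (Fin dZ) → EuclideanSpace ℝ (Fin dZ) → EuclideanSpace ℝ (Fin dZ)}
    (hGZ : ∀ z ∈ Z, ∀ e ∈ E, G z e ∈ Z) :
    ∀ (h : ℕ) (z : EuclideanSpace ℝ (Fin dZ)) (e : Fin h → EuclideanSpace ℝ (Fin dZ)),
      z ∈ Z → (∀ i, e i ∈ E) → sysIter G z h e ∈ Z := by
  intro h
  induction h with
  | zero => intro z e hz _; exact hz
  | succ n ih =>
    intro z e hz he
    exact hGZ _ (ih z _ hz fun i => he _) _ (he _)

lemma sysIter_contract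
    {Z E : Set (EuclideanSpace ℝ (Fin dZ))}
    {G : EuclideanSpace ℝ (Fin dZ) → EuclideanSpace ℝ (Fin dZ) → EuclideanSpace ℝ (Fin dZ)}
    (hGZ : ∀ z ∈ Z, ∀ e ∈ E, G z e ∈ Z)
    {CZ Cε : ℝ} (hCZ0 : 0 ≤ CZ)
    (hContr : ∀ z ∈ Z, ∀ z' ∈ Z, ∀ e ∈ E, ∀ e' ∈ E,
      ‖G z e - G z' e'‖ ≤ CZ * ‖z - z'‖ + Cε * ‖e - e'‖) :
    ∀ (h : ℕ) (z z' : EuclideanSpace ℝ (Fin dZ)) (e : Fin h → EuclideanSpace ℝ (Fin dZ)),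
      z ∈ Z → z' ∈ Z → (∀ i, e i ∈ E) →
      ‖sysIter G z h e - sysIter G z' h e‖ ≤ CZ ^ h * ‖z - z'‖ := by
  intro h
  induction h with
  | zero => intro z z' e hz hz' _; simp [sysIter]
  | succ n ih =>
    intro z z' e hz hz' he
    have h1 := hContr (sysIter G z n (fun i => e i.castSucc))
      (sysIter_mem hGZ n z _ hz fun i => he _)
      (sysIter G z' n (fun i => e i.castSucc))
      (sysIter_mem hGZ n z' _ hz' fun i => he _)
      (e (Fin.last n)) (he _) (e (Fin.last n)) (he _)
    simp only [sub_self, norm_zero, mul_zero, add_zero] at h1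
    calc ‖sysIter G z (n+1) e - sysIter G z' (n+1) e‖
        ≤ CZ * ‖sysIter G z n (fun i => e i.castSucc) - sysIter G z' n (fun i => e i.castSucc)‖ := h1
      _ ≤ CZ * (CZ ^ n * ‖z - z'‖) := by
          exact mul_le_mul_of_nonneg_left (ih z z' _ hz hz' fun i => he _) hCZ0
      _ = CZ ^ (n+1) * ‖z - z'‖ := by ring

/-- Geometric moment contraction for contractive systems: if `G` is contractive with
constants `0 ≤ C_Z < 1`, `0 ≤ C_ε < ∞`, the innovations `ε` are i.i.d. with finite `L^r`
moments (`r ≥ 2`), `Z'_t` is an independent copy of `Z_t` (in particular identically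
distributed), and `Z_{t+h} = G^{(h)}(Z_t, ε_{t+1:t+h})` shares the innovations with
`G^{(h)}(Z'_t, ε_{t+1:t+h})`, then
`‖Z_{t+h} − G^{(h)}(Z'_t, ε_{t+1:t+h})‖_{L^r} ≤ 2 ‖Z_t‖_{L^r} exp(−γ h)` with `γ = −log C_Z`. -/
theorem gmc_of_contractive
    {Ω : Type*} [MeasurableSpace Ω] (μ : Measure Ω) [IsProbabilityMeasure μ]
    (Z E : Set (EuclideanSpace ℝ (Fin dZ)))
    (G : EuclideanSpace ℝ (Fin dZ) → EuclideanSpace ℝ (Fin dZ) → EuclideanSpace ℝ (Fin dZ))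
    (hGZ : ∀ z ∈ Z, ∀ e ∈ E, G z e ∈ Z)
    (CZ Cε : ℝ) (hCZ0 : 0 ≤ CZ) (hCZ1 : CZ < 1) (hCε : 0 ≤ Cε)
    (hContr : ∀ z ∈ Z, ∀ z' ∈ Z, ∀ e ∈ E, ∀ e' ∈ E,
      ‖G z e - G z' e'‖ ≤ CZ * ‖z - z'‖ + Cε * ‖e - e'‖)
    (r : ℝ) (hr : 2 ≤ r)
    (h : ℕ)
    (Zt Z't : Ω → EuclideanSpace ℝ (Fin dZ))
    (ε : Fin h → Ω → EuclideanSpace ℝ (Fin dZ))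
    -- measurability and support conditions
    (hZtmeas : AEMeasurable Zt μ) (hZ'tmeas : AEMeasurable Z't μ)
    (hεmeas : ∀ i, AEMeasurable (ε i) μ)
    (hZtsupp : ∀ᵐ ω ∂μ, Zt ω ∈ Z) (hZ'tsupp : ∀ᵐ ω ∂μ, Z't ω ∈ Z)
    (hεsupp : ∀ i, ∀ᵐ ω ∂μ, ε i ω ∈ E)
    -- the innovations are i.i.d. with finite `L^r` moments
    (hiid : ∀ i j, IdentDistrib (ε i) (ε j) μ μ)
    (hindep : iIndepFun ε μ)
    (hεLr : ∀ i, eLpNorm (ε i) (ENNReal.ofReal r) μ < ⊤)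
    -- `Z'_t` is an independent copy of `Z_t`
    (hcopy : IdentDistrib Zt Z't μ μ)
    (hindepcopy : IndepFun Zt Z't μ)
    (hZtLr : eLpNorm Zt (ENNReal.ofReal r) μ < ⊤) :
    eLpNorm (fun ω => sysIter G (Zt ω) h (fun i => ε i ω)
        - sysIter G (Z't ω) h (fun i => ε i ω)) (ENNReal.ofReal r) μ
      ≤ ENNReal.ofReal (2 * Real.exp (-(-Real.log CZ) * h)) *
          eLpNorm Zt (ENNReal.ofReal r) μ := by
  set p := ENNReal.ofReal r with hp
  have hp1 : 1 ≤ p := ENNReal.one_le_ofReal.mpr (by linarith)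
  have hεsupp' : ∀ᵐ ω ∂μ, ∀ i, ε i ω ∈ E := MeasureTheory.ae_all_iff.mpr hεsupp
  -- pointwise bound
  have hbound : ∀ᵐ ω ∂μ,
      ‖sysIter G (Zt ω) h (fun i => ε i ω) - sysIter G (Z't ω) h (fun i => ε i ω)‖
        ≤ ‖(CZ ^ h : ℝ) • (Zt ω - Z't ω)‖ := by
    filter_upwards [hZtsupp, hZ'tsupp, hεsupp'] with ω hz hz' he
    rw [norm_smul, Real.norm_eq_abs, abs_of_nonneg (pow_nonneg hCZ0 h)]
    exact sysIter_contract hGZ hCZ0 hContr h _ _ _ hz hz' he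
  calc eLpNorm (fun ω => sysIter G (Zt ω) h (fun i => ε i ω)
        - sysIter G (Z't ω) h (fun i => ε i ω)) p μ
      ≤ eLpNorm ((CZ ^ h : ℝ) • (fun ω => Zt ω - Z't ω)) p μ := eLpNorm_mono_ae hbound
    _ = (‖(CZ ^ h : ℝ)‖₊ : ENNReal) * eLpNorm (fun ω => Zt ω - Z't ω) p μ :=
        eLpNorm_const_smul _ _ _ _
    _ ≤ (‖(CZ ^ h : ℝ)‖₊ : ENNReal) * (eLpNorm Zt p μ + eLpNorm Z't p μ) := by
        gcongr
        exact eLpNorm_sub_le hZtmeas.aestronglyMeasurable hZ'tmeas.aestronglyMeasurable hp1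
    _ = ENNReal.ofReal (CZ ^ h) * (2 * eLpNorm Zt p μ) := by
        rw [← hcopy.eLpNorm_eq p, two_mul]
        congr 1
        exact Real.enorm_eq_ofReal (pow_nonneg hCZ0 h)
    _ ≤ ENNReal.ofReal (2 * Real.exp (-(-Real.log CZ) * h)) * eLpNorm Zt p μ := by
        rw [← mul_assoc]
        gcongr
        calc ENNReal.ofReal (CZ ^ h) * 2
            = ENNReal.ofReal (2 * CZ ^ h) := by
              rw [ENNReal.ofReal_mul (by norm_num : (0:ℝ) ≤ 2), ENNReal.ofReal_ofNat, mul_comm]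
          _ ≤ ENNReal.ofReal (2 * Real.exp (-(-Real.log CZ) * ↑h)) := by
              apply ENNReal.ofReal_le_ofReal
              rw [neg_neg]
              have hkey : CZ ^ h ≤ Real.exp (Real.log CZ * ↑h) := by
                rcases eq_or_lt_of_le hCZ0 with hCZeq | hCZpos
                · rcases Nat.eq_zero_or_pos h with rfl | hh
                  · simp
                  · rw [← hCZeq, zero_pow hh.ne']
                    positivity
                · rw [mul_comm (Real.log CZ), Real.exp_nat_mul, Real.exp_log hCZpos]
              linarith
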